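/- Let 1 ≤ p < ∞, R satisfy the Fatou property, and v be a weight on Y. If ‖·‖_{Λ^p_R(v)} is a norm (in particular satisfies the triangle inequality), then the concavity condition V(R(A ∪ B)) + V(R(A ∩ B)) ≤ V(R(A)) + V(R(B)) holds for all measurable sets A, B ⊆ X, where V(E) = ∫_E v dν. -/

import Mathlib

open MeasureTheory Set Filter
open scoped ENNReal NNReal

/-- The rearrangement of `f` with respect to the set transformation `R`. -/
noncomputable def rearr {X Y : Type*} (R : Set X → Set Y) (f : X → ℝ) (y : Y) : ℝ≥0∞ :=
  ∫⁻ t in Set.Ioi (0 : ℝ), (R {x | t < |f x|}).indicator (fun _ => (1 : ℝ≥0∞)) y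

/-- The Lorentz space functional `‖f‖_{Λ^p_R(v)} = (∫_Y (f*_R)^p v dν)^{1/p}`. -/
noncomputable def lorentzNorm {X Y : Type*} [MeasurableSpace Y]
    (R : Set X → Set Y) (ν : Measure Y) (v : Y → ℝ≥0∞) (p : ℝ) (f : X → ℝ) : ℝ≥0∞ :=
  (∫⁻ y, rearr R f y ^ p * v y ∂ν) ^ (1 / p)

/-- derivative of `ε ↦ (c + d * (k-ε)^p)^(1/p)` at `0`. -/
lemma deriv_aux {p : ℝ} (hp : 1 ≤ p) (c d k : ℝ) (hk : 0 < k)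
    (hpos : 0 < c + d * k ^ p) :
    HasDerivAt (fun ε : ℝ => (c + d * (k - ε) ^ p) ^ (1/p))
      (-(d * k ^ (p-1) * (c + d * k ^ p) ^ (1/p - 1))) 0 := by
  have hp0 : p ≠ 0 := by linarith
  have h1 : HasDerivAt (fun ε : ℝ => k - ε) (-1) 0 := by
    simpa using (hasDerivAt_id (0:ℝ)).const_sub k
  have h2 : HasDerivAt (fun ε : ℝ => (k - ε) ^ p) (-1 * p * k ^ (p-1)) 0 := by
    have := h1.rpow_const (p := p) (Or.inl (by simpa using hk.ne'))
    simpa using this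
  have h3 : HasDerivAt (fun ε : ℝ => c + d * (k - ε) ^ p) (d * (-1 * p * k ^ (p-1))) 0 :=
    (h2.const_mul d).const_add c
  have h4 := h3.rpow_const (p := 1/p) (Or.inl (by simpa using hpos.ne'))
  simp only [sub_zero] at h4
  convert h4 using 1
  field_simp

lemma real_key {p u iW dI aW dA bW dB : ℝ} (hp : 1 ≤ p) (hu : 0 < u)
    (hiW : 0 ≤ iW) (haW : 0 ≤ aW) (hbW : 0 ≤ bW)
    (hdI : 0 ≤ dI) (hdA : 0 ≤ dA) (hdB : 0 ≤ dB)
    (huI : iW + dI = u) (huA : aW + dA = u) (huB : bW + dB = u)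
    (H : ∀ ε : ℝ, 0 < ε → ε < 1 →
      (2^p * iW + (2-ε)^p * dI)^(1/p)
        ≤ (aW + (1-ε)^p * dA)^(1/p) + (bW + (1-ε)^p * dB)^(1/p)) :
    u + iW ≤ aW + bW := by
  have hp0 : p ≠ 0 := by linarith
  have h2p : (0:ℝ) < 2 ^ p := Real.rpow_pos_of_pos two_pos p
  set F : ℝ → ℝ := fun ε =>
    (aW + dA * (1-ε)^p)^(1/p) + (bW + dB * (1-ε)^p)^(1/p)
      - (2^p * iW + dI * (2-ε)^p)^(1/p) with hF
  have hF0 : F 0 = 0 := by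
    have e1 : aW + dA * (1:ℝ)^p = u := by rw [Real.one_rpow]; linarith
    have e2 : bW + dB * (1:ℝ)^p = u := by rw [Real.one_rpow]; linarith
    have e3 : 2^p * iW + dI * (2:ℝ)^p = 2^p * u := by ring_nf; nlinarith [h2p]
    have e4 : ((2:ℝ)^p * u) ^ (1/p) = 2 * u ^ (1/p) := by
      rw [Real.mul_rpow h2p.le hu.le, ← Real.rpow_mul (by norm_num : (0:ℝ) ≤ 2),
        mul_one_div, div_self hp0, Real.rpow_one]
    simp only [hF, sub_zero, e1, e2, e3, e4]
    ring
  have hFnn : ∀ ε : ℝ, 0 < ε → ε < 1 → 0 ≤ F ε := by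
    intro ε h0 h1
    have := H ε h0 h1
    simp only [hF]
    have c1 : aW + dA * (1-ε)^p = aW + (1-ε)^p * dA := by ring
    have c2 : bW + dB * (1-ε)^p = bW + (1-ε)^p * dB := by ring
    have c3 : 2^p * iW + dI * (2-ε)^p = 2^p * iW + (2-ε)^p * dI := by ring
    rw [c1, c2, c3]
    linarith
  have hbA : (0:ℝ) < aW + dA * 1 ^ p := by rw [Real.one_rpow]; linarith
  have hbB : (0:ℝ) < bW + dB * 1 ^ p := by rw [Real.one_rpow]; linarith
  have hbG : (0:ℝ) < 2^p * iW + dI * 2 ^ p := by nlinarith [h2p]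
  have dA' := deriv_aux hp aW dA 1 one_pos hbA
  have dB' := deriv_aux hp bW dB 1 one_pos hbB
  have dG' := deriv_aux hp (2^p * iW) dI 2 two_pos hbG
  have hDF : HasDerivAt F
      (-(dA * 1 ^ (p-1) * (aW + dA * 1 ^ p) ^ (1/p - 1))
       + -(dB * 1 ^ (p-1) * (bW + dB * 1 ^ p) ^ (1/p - 1))
       - -(dI * 2 ^ (p-1) * (2^p * iW + dI * 2 ^ p) ^ (1/p - 1))) 0 :=
    (dA'.add dB').sub dG'
  have hslope : Tendsto (slope F 0) (nhdsWithin 0 (Set.Ioi 0)) (nhds _) :=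
    (hasDerivAt_iff_tendsto_slope.mp hDF).mono_left
      (nhdsWithin_mono _ (fun x hx => ne_of_gt hx))
  have hev : ∀ᶠ ε in nhdsWithin (0:ℝ) (Set.Ioi 0), 0 ≤ slope F 0 ε := by
    filter_upwards [Ioo_mem_nhdsGT_of_mem (Set.left_mem_Ico.mpr one_pos)] with ε hε
    rw [slope_def_field]
    rw [hF0]
    have := hFnn ε hε.1 hε.2
    have : 0 ≤ F ε / ε := div_nonneg this hε.1.le
    simpa using this
  have hD0 : 0 ≤ (-(dA * 1 ^ (p-1) * (aW + dA * 1 ^ p) ^ (1/p - 1))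
       + -(dB * 1 ^ (p-1) * (bW + dB * 1 ^ p) ^ (1/p - 1))
       - -(dI * 2 ^ (p-1) * (2^p * iW + dI * 2 ^ p) ^ (1/p - 1))) :=
    ge_of_tendsto hslope hev
  have e1 : aW + dA * (1:ℝ)^p = u := by rw [Real.one_rpow]; linarith
  have e2 : bW + dB * (1:ℝ)^p = u := by rw [Real.one_rpow]; linarith
  have e3 : 2^p * iW + dI * (2:ℝ)^p = 2^p * u := by ring_nf; nlinarith [h2p]
  have e5 : ((2:ℝ)^p * u) ^ (1/p - 1) = 2^(1-p) * u ^ (1/p-1) := by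
    rw [Real.mul_rpow h2p.le hu.le, ← Real.rpow_mul (by norm_num : (0:ℝ) ≤ 2)]
    congr 1
    field_simp
  have e6 : (2:ℝ)^(p-1) * 2^(1-p) = 1 := by
    rw [← Real.rpow_add two_pos]
    norm_num
  rw [e1, e2, e3, e5, Real.one_rpow] at hD0
  have hq : (0:ℝ) < u ^ (1/p - 1) := Real.rpow_pos_of_pos hu _
  have e7 : dI * 2^(p-1) * (2^(1-p) * u^(1/p-1)) = dI * u^(1/p-1) := by
    rw [show dI * 2^(p-1) * (2^(1-p) * u^(1/p-1))
        = dI * (2^(p-1) * 2^(1-p)) * u^(1/p-1) from by ring, e6]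
    ring
  rw [e7] at hD0
  have hle : dA + dB ≤ dI := by
    by_contra hcon
    push_neg at hcon
    have : (dI - dA - dB) * u^(1/p-1) < 0 :=
      mul_neg_of_neg_of_pos (by linarith) hq
    nlinarith [hD0]
  linarith

section MeasureLemmas
variable {X Y : Type*} [MeasurableSpace X] [MeasurableSpace Y]

omit [MeasurableSpace X] [MeasurableSpace Y] in
lemma rearr_step (R : Set X → Set Y) {S U : Set X} (hSU : S ⊆ U) {r s : ℝ}
    (hs : 0 ≤ s) (hsr : s ≤ r) (hr : 0 < r) {y : Y} (hy : y ∉ R ∅) :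
    rearr R (fun x => S.indicator (fun _ => r) x + (U \ S).indicator (fun _ => s) x) y
      = ENNReal.ofReal s * (R U).indicator (fun _ => (1:ℝ≥0∞)) y
        + ENNReal.ofReal (r - s) * (R S).indicator (fun _ => (1:ℝ≥0∞)) y := by
  classical
  set f : X → ℝ := fun x => S.indicator (fun _ => r) x + (U \ S).indicator (fun _ => s) x
    with hfdef
  have hfval : ∀ x, f x = if x ∈ S then r else if x ∈ U then s else 0 := by
    intro x
    by_cases hxS : x ∈ S
    · simp [hfdef, Set.indicator_apply, hxS]
    · by_cases hxU : x ∈ U <;> simp [hfdef, Set.indicator_apply, hxS, hxU]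
  have habs : ∀ x, |f x| = if x ∈ S then r else if x ∈ U then s else 0 := by
    intro x
    rw [hfval x]
    by_cases hxS : x ∈ S
    · simp [hxS, abs_of_pos hr]
    · by_cases hxU : x ∈ U <;> simp [hxS, hxU, abs_of_nonneg hs]
  have hset1 : ∀ t : ℝ, 0 < t → t < s → {x | t < |f x|} = U := by
    intro t ht hts
    ext x
    simp only [mem_setOf_eq, habs x]
    by_cases hxS : x ∈ S
    · simp only [if_pos hxS]
      exact ⟨fun _ => hSU hxS, fun _ => by linarith⟩
    · by_cases hxU : x ∈ U
      · simp only [if_neg hxS, if_pos hxU]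
        exact ⟨fun _ => hxU, fun _ => hts⟩
      · simp only [if_neg hxS, if_neg hxU]
        exact ⟨fun h => absurd h (by linarith), fun h => absurd h hxU⟩
  have hset2 : ∀ t : ℝ, s ≤ t → t < r → {x | t < |f x|} = S := by
    intro t hst htr
    ext x
    simp only [mem_setOf_eq, habs x]
    by_cases hxS : x ∈ S
    · simp only [if_pos hxS]
      exact ⟨fun _ => hxS, fun _ => htr⟩
    · by_cases hxU : x ∈ U
      · simp only [if_neg hxS, if_pos hxU]
        exact ⟨fun h => absurd h (by linarith), fun h => absurd h hxS⟩
      · simp only [if_neg hxS, if_neg hxU]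
        exact ⟨fun h => absurd h (by linarith), fun h => absurd h hxS⟩
  have hset3 : ∀ t : ℝ, r ≤ t → {x | t < |f x|} = ∅ := by
    intro t hrt
    ext x
    simp only [mem_setOf_eq, mem_empty_iff_false, iff_false, not_lt, habs x]
    by_cases hxS : x ∈ S
    · simp only [if_pos hxS]; linarith
    · by_cases hxU : x ∈ U
      · simp only [if_neg hxS, if_pos hxU]; linarith
      · simp only [if_neg hxS, if_neg hxU]; linarith
  rw [rearr]
  have hsplit : (Set.Ioi (0:ℝ)) = Set.Ioo 0 r ∪ Set.Ici r := (Set.Ioo_union_Ici_eq_Ioi hr).symm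
  rw [hsplit, lintegral_union measurableSet_Ici
    (by rw [Set.disjoint_left]; intro t htoo hti; exact absurd htoo.2 (not_lt.mpr hti))]
  have hIci : ∫⁻ t in Set.Ici r, (R {x | t < |f x|}).indicator (fun _ => (1:ℝ≥0∞)) y = 0 := by
    rw [setLIntegral_congr_fun measurableSet_Ici
      (fun t (ht : t ∈ Set.Ici r) => by
        rw [hset3 t ht, Set.indicator_of_notMem hy])]
    simp
  rw [hIci, add_zero]
  by_cases hs0 : s = 0
  · subst hs0
    rw [setLIntegral_congr_fun measurableSet_Ioo
      (fun t (ht : t ∈ Set.Ioo 0 r) => by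
        rw [hset2 t ht.1.le ht.2])]
    rw [setLIntegral_const, Real.volume_Ioo]
    simp [mul_comm]
  · have hs' : 0 < s := lt_of_le_of_ne hs (Ne.symm hs0)
    rw [← Set.Ioo_union_Ico_eq_Ioo hs' hsr, lintegral_union measurableSet_Ico
      (by rw [Set.disjoint_left]; intro t htoo hti; exact absurd htoo.2 (not_lt.mpr hti.1))]
    rw [setLIntegral_congr_fun measurableSet_Ioo
      (fun t (ht : t ∈ Set.Ioo 0 s) => by rw [hset1 t ht.1 ht.2]),
      setLIntegral_congr_fun measurableSet_Ico
      (fun t (ht : t ∈ Set.Ico s r) => by rw [hset2 t ht.1 ht.2])]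
    rw [setLIntegral_const, setLIntegral_const, Real.volume_Ioo, Real.volume_Ico]
    simp [mul_comm]

variable {R : Set X → Set Y} {ν : Measure Y} {v : Y → ℝ≥0∞} {p : ℝ}

omit [MeasurableSpace X] in
lemma key_integral (hR0 : ν (R ∅) = 0) (hv : Measurable v) (hp : 1 ≤ p)
    {S U : Set X} (hSU : S ⊆ U) (hRSU : R S ⊆ R U)
    (hRSm : MeasurableSet (R S)) (hRUm : MeasurableSet (R U))
    {r s : ℝ} (hs : 0 ≤ s) (hsr : s ≤ r) (hr : 0 < r) :
    ∫⁻ y, rearr R (fun x => S.indicator (fun _ => r) x + (U \ S).indicator (fun _ => s) x) y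
        ^ p * v y ∂ν
      = ENNReal.ofReal r ^ p * (∫⁻ y in R S, v y ∂ν)
        + ENNReal.ofReal s ^ p * (∫⁻ y in R U \ R S, v y ∂ν) := by
  have hp0 : p ≠ 0 := by linarith
  set g : Y → ℝ≥0∞ := fun y => (ENNReal.ofReal s * (R U).indicator (fun _ => (1:ℝ≥0∞)) y
      + ENNReal.ofReal (r - s) * (R S).indicator (fun _ => (1:ℝ≥0∞)) y) ^ p * v y with hgdef
  have step : ∫⁻ y, rearr R (fun x => S.indicator (fun _ => r) x
        + (U \ S).indicator (fun _ => s) x) y ^ p * v y ∂ν = ∫⁻ y, g y ∂ν := by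
    refine lintegral_congr_ae ?_
    filter_upwards [measure_eq_zero_iff_ae_notMem.mp hR0] with y hy
    rw [rearr_step R hSU hs hsr hr hy]
  rw [step]
  have g_eq_S : ∀ y ∈ R S, g y = ENNReal.ofReal r ^ p * v y := by
    intro y hy
    rw [hgdef]
    simp only
    rw [Set.indicator_of_mem hy, Set.indicator_of_mem (hRSU hy), mul_one, mul_one,
      ← ENNReal.ofReal_add hs (by linarith)]
    congr 3
    ring
  have g_eq_D : ∀ y ∈ R U \ R S, g y = ENNReal.ofReal s ^ p * v y := by
    intro y hy
    rw [hgdef]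
    simp only
    rw [Set.indicator_of_mem hy.1, Set.indicator_of_notMem hy.2, mul_one, mul_zero, add_zero]
  have g_eq_C : ∀ y ∈ (R U)ᶜ, g y = 0 := by
    intro y hy
    rw [hgdef]
    simp only
    rw [Set.indicator_of_notMem hy, Set.indicator_of_notMem (fun h => hy (hRSU h)),
      mul_zero, mul_zero, add_zero, ENNReal.zero_rpow_of_pos (by linarith), zero_mul]
  have h1 : ∫⁻ y, g y ∂ν = ∫⁻ y in R U, g y ∂ν := by
    rw [← lintegral_add_compl (μ := ν) g hRUm]
    have : ∫⁻ y in (R U)ᶜ, g y ∂ν = 0 := by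
      rw [setLIntegral_congr_fun hRUm.compl g_eq_C]
      simp
    rw [this, add_zero]
  have h2 : ∫⁻ y in R U, g y ∂ν = ∫⁻ y in R S, g y ∂ν + ∫⁻ y in R U \ R S, g y ∂ν := by
    rw [← lintegral_union (hRUm.diff hRSm) disjoint_sdiff_right, Set.union_diff_cancel hRSU]
  rw [h1, h2]
  congr 1
  · rw [setLIntegral_congr_fun hRSm g_eq_S]
    exact lintegral_const_mul _ hv
  · rw [setLIntegral_congr_fun (hRUm.diff hRSm) g_eq_D]
    exact lintegral_const_mul _ hv

omit [MeasurableSpace X] [MeasurableSpace Y] in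
lemma R_mono (hRunion : ∀ A : ℕ → Set X, Monotone A → R (⋃ j, A j) = ⋃ j, R (A j))
    {S T : Set X} (hST : S ⊆ T) : R S ⊆ R T := by
  classical
  set A : ℕ → Set X := fun n => if n = 0 then S else T with hA
  have hmono : Monotone A := by
    intro m n hmn
    by_cases hm : m = 0
    · by_cases hn : n = 0 <;> simp [hA, hm, hn, hST]
    · have hn : n ≠ 0 := by omega
      simp [hA, hm, hn]
  have hU : (⋃ j, A j) = T := by
    apply Set.Subset.antisymm
    · refine Set.iUnion_subset fun j => ?_
      by_cases hj : j = 0 <;> simp [hA, hj, hST]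
    · intro x hx
      exact Set.mem_iUnion.mpr ⟨1, by simp [hA, hx]⟩
  have h := hRunion A hmono
  rw [hU] at h
  rw [h]
  have : R S = R (A 0) := by simp [hA]
  rw [this]
  exact Set.subset_iUnion (fun j => R (A j)) 0

end MeasureLemmas

theorem stmt12 {X Y : Type*} [MeasurableSpace X] [MeasurableSpace Y]
    (μ : Measure X) (ν : Measure Y) [SigmaFinite μ] [SigmaFinite ν]
    (R : Set X → Set Y) (hR0 : ν (R ∅) = 0)
    (hRmeas : ∀ A : Set X, MeasurableSet A → MeasurableSet (R A))
    (hRunion : ∀ A : ℕ → Set X, Monotone A → R (⋃ j, A j) = ⋃ j, R (A j))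
    (v : Y → ℝ≥0∞) (hv : Measurable v)
    (p : ℝ) (hp : 1 ≤ p)
    (htriangle : ∀ f g : X → ℝ, Measurable f → Measurable g →
      lorentzNorm R ν v p (f + g) ≤ lorentzNorm R ν v p f + lorentzNorm R ν v p g) :
    ∀ A B : Set X, MeasurableSet A → MeasurableSet B →
      (∫⁻ y in R (A ∪ B), v y ∂ν) + ∫⁻ y in R (A ∩ B), v y ∂ν
        ≤ (∫⁻ y in R A, v y ∂ν) + ∫⁻ y in R B, v y ∂ν := by
  intro A B hA hB
  have hp' : (0:ℝ) < p := by linarith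
  have hip : (0:ℝ) < 1 / p := by positivity
  have hUm : MeasurableSet (A ∪ B) := hA.union hB
  have hIm : MeasurableSet (A ∩ B) := hA.inter hB
  have hRA := hRmeas A hA
  have hRB := hRmeas B hB
  have hRU := hRmeas _ hUm
  have hRI := hRmeas _ hIm
  have hRAU : R A ⊆ R (A ∪ B) := R_mono hRunion Set.subset_union_left
  have hRBU : R B ⊆ R (A ∪ B) := R_mono hRunion Set.subset_union_right
  have hRIU : R (A ∩ B) ⊆ R (A ∪ B) :=
    R_mono hRunion (Set.inter_subset_left.trans Set.subset_union_left)
  have hRBAB : R (B \ A) ⊆ R B := R_mono hRunion Set.diff_subset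
  set WA := ∫⁻ y in R A, v y ∂ν with hWA
  set WB := ∫⁻ y in R B, v y ∂ν with hWB
  set WU := ∫⁻ y in R (A ∪ B), v y ∂ν with hWU
  set WI := ∫⁻ y in R (A ∩ B), v y ∂ν with hWI
  by_cases htop : WU = ⊤
  · -- infinite case: show WA + WB = ⊤
    have hmf : Measurable (fun x => A.indicator (fun _ => (1:ℝ)) x
        + (A \ A).indicator (fun _ => (0:ℝ)) x) :=
      (measurable_const.indicator hA).add (measurable_const.indicator (hA.diff hA))
    have hmg : Measurable (fun x => (B \ A).indicator (fun _ => (1:ℝ)) x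
        + ((B \ A) \ (B \ A)).indicator (fun _ => (0:ℝ)) x) :=
      (measurable_const.indicator (hB.diff hA)).add
        (measurable_const.indicator ((hB.diff hA).diff (hB.diff hA)))
    have htr := htriangle _ _ hmf hmg
    have hfg : (fun x => A.indicator (fun _ => (1:ℝ)) x
          + (A \ A).indicator (fun _ => (0:ℝ)) x)
        + (fun x => (B \ A).indicator (fun _ => (1:ℝ)) x
          + ((B \ A) \ (B \ A)).indicator (fun _ => (0:ℝ)) x)
        = fun x => (A ∪ B).indicator (fun _ => (1:ℝ)) x
          + ((A ∪ B) \ (A ∪ B)).indicator (fun _ => (0:ℝ)) x := by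
      funext x
      simp only [Pi.add_apply, Set.indicator_apply, Set.mem_diff, Set.mem_union]
      by_cases hxA : x ∈ A <;> by_cases hxB : x ∈ B <;> simp [hxA, hxB]
    rw [hfg] at htr
    have eq_f : lorentzNorm R ν v p (fun x => A.indicator (fun _ => (1:ℝ)) x
        + (A \ A).indicator (fun _ => (0:ℝ)) x) = WA ^ (1/p) := by
      simp only [lorentzNorm]
      rw [key_integral hR0 hv hp subset_rfl subset_rfl hRA hRA le_rfl zero_le_one one_pos]
      simp [ENNReal.zero_rpow_of_pos hp']
      rfl
    have eq_g : lorentzNorm R ν v p (fun x => (B \ A).indicator (fun _ => (1:ℝ)) x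
        + ((B \ A) \ (B \ A)).indicator (fun _ => (0:ℝ)) x)
        = (∫⁻ y in R (B \ A), v y ∂ν) ^ (1/p) := by
      simp only [lorentzNorm]
      rw [key_integral hR0 hv hp subset_rfl subset_rfl (hRmeas _ (hB.diff hA))
        (hRmeas _ (hB.diff hA)) le_rfl zero_le_one one_pos]
      simp [ENNReal.zero_rpow_of_pos hp']
    have eq_u : lorentzNorm R ν v p (fun x => (A ∪ B).indicator (fun _ => (1:ℝ)) x
        + ((A ∪ B) \ (A ∪ B)).indicator (fun _ => (0:ℝ)) x) = WU ^ (1/p) := by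
      simp only [lorentzNorm]
      rw [key_integral hR0 hv hp subset_rfl subset_rfl hRU hRU le_rfl zero_le_one one_pos]
      simp [ENNReal.zero_rpow_of_pos hp']
      rfl
    rw [eq_f, eq_g, eq_u, htop, ENNReal.top_rpow_of_pos hip] at htr
    have hsum := top_le_iff.mp htr
    have : WA = ⊤ ∨ WB = ⊤ := by
      rcases ENNReal.add_eq_top.mp hsum with h | h
      · exact Or.inl ((ENNReal.rpow_eq_top_iff_of_pos hip).mp h)
      · refine Or.inr (eq_top_iff.mpr ?_)
        have := (ENNReal.rpow_eq_top_iff_of_pos hip).mp h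
        exact this ▸ lintegral_mono_set hRBAB
    rcases this with h | h
    · rw [h]
      simp
    · rw [h]
      simp
  · -- finite case
    set DA := ∫⁻ y in R (A ∪ B) \ R A, v y ∂ν with hDA
    set DB := ∫⁻ y in R (A ∪ B) \ R B, v y ∂ν with hDB
    set DI := ∫⁻ y in R (A ∪ B) \ R (A ∩ B), v y ∂ν with hDI
    have hsumA : WA + DA = WU := by
      rw [hWA, hDA, hWU, ← lintegral_union (hRU.diff hRA) disjoint_sdiff_right,
        Set.union_diff_cancel hRAU]
    have hsumB : WB + DB = WU := by
      rw [hWB, hDB, hWU, ← lintegral_union (hRU.diff hRB) disjoint_sdiff_right,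
        Set.union_diff_cancel hRBU]
    have hsumI : WI + DI = WU := by
      rw [hWI, hDI, hWU, ← lintegral_union (hRU.diff hRI) disjoint_sdiff_right,
        Set.union_diff_cancel hRIU]
    have hWAf : WA ≠ ⊤ := ne_top_of_le_ne_top htop (hsumA ▸ le_self_add)
    have hWBf : WB ≠ ⊤ := ne_top_of_le_ne_top htop (hsumB ▸ le_self_add)
    have hWIf : WI ≠ ⊤ := ne_top_of_le_ne_top htop (hsumI ▸ le_self_add)
    have hDAf : DA ≠ ⊤ := ne_top_of_le_ne_top htop (hsumA ▸ le_add_self)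
    have hDBf : DB ≠ ⊤ := ne_top_of_le_ne_top htop (hsumB ▸ le_add_self)
    have hDIf : DI ≠ ⊤ := ne_top_of_le_ne_top htop (hsumI ▸ le_add_self)
    by_cases hzero : WU = 0
    · have hWI0 : WI = 0 := le_antisymm (by rw [hzero] at hsumI; exact hsumI ▸ le_self_add)
        zero_le
      rw [hzero, hWI0, add_zero]
      exact zero_le
    · have hu : 0 < WU.toReal := ENNReal.toReal_pos hzero htop
      have H : ∀ ε : ℝ, 0 < ε → ε < 1 →
          (2^p * WI.toReal + (2-ε)^p * DI.toReal)^(1/p)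
            ≤ (WA.toReal + (1-ε)^p * DA.toReal)^(1/p)
              + (WB.toReal + (1-ε)^p * DB.toReal)^(1/p) := by
        intro ε hε0 hε1
        have hmf : Measurable (fun x => A.indicator (fun _ => (1:ℝ)) x
            + ((A ∪ B) \ A).indicator (fun _ => (1 - ε)) x) :=
          (measurable_const.indicator hA).add (measurable_const.indicator (hUm.diff hA))
        have hmg : Measurable (fun x => B.indicator (fun _ => (1:ℝ)) x
            + ((A ∪ B) \ B).indicator (fun _ => (1 - ε)) x) :=
          (measurable_const.indicator hB).add (measurable_const.indicator (hUm.diff hB))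
        have htr := htriangle _ _ hmf hmg
        have hfg : (fun x => A.indicator (fun _ => (1:ℝ)) x
              + ((A ∪ B) \ A).indicator (fun _ => (1 - ε)) x)
            + (fun x => B.indicator (fun _ => (1:ℝ)) x
              + ((A ∪ B) \ B).indicator (fun _ => (1 - ε)) x)
            = fun x => (A ∩ B).indicator (fun _ => (2:ℝ)) x
              + ((A ∪ B) \ (A ∩ B)).indicator (fun _ => (2 - ε)) x := by
          funext x
          simp only [Pi.add_apply, Set.indicator_apply, Set.mem_diff, Set.mem_union,
            Set.mem_inter_iff]
          by_cases hxA : x ∈ A <;> by_cases hxB : x ∈ B <;> simp [hxA, hxB] <;> ring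
        rw [hfg] at htr
        have eq_f : lorentzNorm R ν v p (fun x => A.indicator (fun _ => (1:ℝ)) x
            + ((A ∪ B) \ A).indicator (fun _ => (1 - ε)) x)
            = (ENNReal.ofReal 1 ^ p * WA + ENNReal.ofReal (1-ε) ^ p * DA) ^ (1/p) := by
          simp only [lorentzNorm]
          rw [key_integral hR0 hv hp Set.subset_union_left hRAU hRA hRU
            (by linarith) (by linarith) one_pos]
        have eq_g : lorentzNorm R ν v p (fun x => B.indicator (fun _ => (1:ℝ)) x
            + ((A ∪ B) \ B).indicator (fun _ => (1 - ε)) x)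
            = (ENNReal.ofReal 1 ^ p * WB + ENNReal.ofReal (1-ε) ^ p * DB) ^ (1/p) := by
          simp only [lorentzNorm]
          rw [key_integral hR0 hv hp Set.subset_union_right hRBU hRB hRU
            (by linarith) (by linarith) one_pos]
        have eq_s : lorentzNorm R ν v p (fun x => (A ∩ B).indicator (fun _ => (2:ℝ)) x
            + ((A ∪ B) \ (A ∩ B)).indicator (fun _ => (2 - ε)) x)
            = (ENNReal.ofReal 2 ^ p * WI + ENNReal.ofReal (2-ε) ^ p * DI) ^ (1/p) := by
          simp only [lorentzNorm]
          rw [key_integral hR0 hv hp (Set.inter_subset_left.trans Set.subset_union_left)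
            hRIU hRI hRU (by linarith) (by linarith) two_pos]
        rw [eq_f, eq_g, eq_s] at htr
        have hrpow_ne : ∀ (x : ℝ), ENNReal.ofReal x ^ p ≠ ⊤ :=
          fun x => ENNReal.rpow_ne_top_of_nonneg hp'.le ENNReal.ofReal_ne_top
        have hTAf : ENNReal.ofReal 1 ^ p * WA + ENNReal.ofReal (1-ε) ^ p * DA ≠ ⊤ :=
          ENNReal.add_ne_top.mpr ⟨ENNReal.mul_ne_top (hrpow_ne 1) hWAf,
            ENNReal.mul_ne_top (hrpow_ne _) hDAf⟩
        have hTBf : ENNReal.ofReal 1 ^ p * WB + ENNReal.ofReal (1-ε) ^ p * DB ≠ ⊤ :=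
          ENNReal.add_ne_top.mpr ⟨ENNReal.mul_ne_top (hrpow_ne 1) hWBf,
            ENNReal.mul_ne_top (hrpow_ne _) hDBf⟩
        have hRHSf : (ENNReal.ofReal 1 ^ p * WA + ENNReal.ofReal (1-ε) ^ p * DA) ^ (1/p)
            + (ENNReal.ofReal 1 ^ p * WB + ENNReal.ofReal (1-ε) ^ p * DB) ^ (1/p) ≠ ⊤ :=
          ENNReal.add_ne_top.mpr ⟨ENNReal.rpow_ne_top_of_nonneg hip.le hTAf,
            ENNReal.rpow_ne_top_of_nonneg hip.le hTBf⟩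
        have hreal := ENNReal.toReal_mono hRHSf htr
        rw [ENNReal.toReal_add (ENNReal.rpow_ne_top_of_nonneg hip.le hTAf)
          (ENNReal.rpow_ne_top_of_nonneg hip.le hTBf)] at hreal
        have eA : ((ENNReal.ofReal 1 ^ p * WA + ENNReal.ofReal (1-ε) ^ p * DA)
            ^ (1/p)).toReal = (WA.toReal + (1-ε)^p * DA.toReal)^(1/p) := by
          rw [← ENNReal.toReal_rpow]
          congr 1
          rw [ENNReal.toReal_add (ENNReal.mul_ne_top (hrpow_ne 1) hWAf)
              (ENNReal.mul_ne_top (hrpow_ne _) hDAf), ENNReal.toReal_mul, ENNReal.toReal_mul,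
            ← ENNReal.toReal_rpow, ← ENNReal.toReal_rpow,
            ENNReal.toReal_ofReal zero_le_one, ENNReal.toReal_ofReal (by linarith),
            Real.one_rpow, one_mul]
        have eB : ((ENNReal.ofReal 1 ^ p * WB + ENNReal.ofReal (1-ε) ^ p * DB)
            ^ (1/p)).toReal = (WB.toReal + (1-ε)^p * DB.toReal)^(1/p) := by
          rw [← ENNReal.toReal_rpow]
          congr 1
          rw [ENNReal.toReal_add (ENNReal.mul_ne_top (hrpow_ne 1) hWBf)
              (ENNReal.mul_ne_top (hrpow_ne _) hDBf), ENNReal.toReal_mul, ENNReal.toReal_mul,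
            ← ENNReal.toReal_rpow, ← ENNReal.toReal_rpow,
            ENNReal.toReal_ofReal zero_le_one, ENNReal.toReal_ofReal (by linarith),
            Real.one_rpow, one_mul]
        have eS : ((ENNReal.ofReal 2 ^ p * WI + ENNReal.ofReal (2-ε) ^ p * DI)
            ^ (1/p)).toReal = (2^p * WI.toReal + (2-ε)^p * DI.toReal)^(1/p) := by
          rw [← ENNReal.toReal_rpow]
          congr 1
          rw [ENNReal.toReal_add (ENNReal.mul_ne_top (hrpow_ne 2) hWIf)
              (ENNReal.mul_ne_top (hrpow_ne _) hDIf), ENNReal.toReal_mul, ENNReal.toReal_mul,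
            ← ENNReal.toReal_rpow, ← ENNReal.toReal_rpow,
            ENNReal.toReal_ofReal (by norm_num : (0:ℝ) ≤ 2),
            ENNReal.toReal_ofReal (by linarith)]
        rw [eA, eB, eS] at hreal
        exact hreal
      have hfinal := real_key hp hu ENNReal.toReal_nonneg ENNReal.toReal_nonneg
        ENNReal.toReal_nonneg ENNReal.toReal_nonneg ENNReal.toReal_nonneg
        ENNReal.toReal_nonneg
        (by rw [← ENNReal.toReal_add hWIf hDIf, hsumI])
        (by rw [← ENNReal.toReal_add hWAf hDAf, hsumA])
        (by rw [← ENNReal.toReal_add hWBf hDBf, hsumB]) H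
      have hne1 : WU + WI ≠ ⊤ := ENNReal.add_ne_top.mpr ⟨htop, hWIf⟩
      have hne2 : WA + WB ≠ ⊤ := ENNReal.add_ne_top.mpr ⟨hWAf, hWBf⟩
      refine (ENNReal.toReal_le_toReal hne1 hne2).mp ?_
      rw [ENNReal.toReal_add htop hWIf, ENNReal.toReal_add hWAf hWBf]
      exact hfinal
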